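/- Define ρ₃ : ℝ → ℝ by ρ₃(s) = ( 1 + 4e^{s/2} − √(12e^{s} + 8e^{s/2} + 1) ) / (2e^{s}). Then ρ₃ is (twice) differentiable in a neighborhood of 0 and ρ₃(0) = (5−√21)/2, ρ₃'(0) = −3/2 + (13/42)√21, and ρ₃''(0) = 1 − (94/441)√21. Consequently −ρ₃'(0)/ρ₃(0) = −(−3/2 + (13/42)√21)/((5−√21)/2) ≈ 0.39089 and (ρ₃'(0)/ρ₃(0))² − ρ₃''(0)/ρ₃(0) ≈ 0.041565. -/

import Mathlib

open Real

noncomputable def Uu (s : ℝ) : ℝ := 12 * Real.exp s + 8 * Real.exp (s / 2) + 1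
noncomputable def Uu' (s : ℝ) : ℝ := 12 * Real.exp s + 4 * Real.exp (s / 2)
noncomputable def Uu'' (s : ℝ) : ℝ := 12 * Real.exp s + 2 * Real.exp (s / 2)
noncomputable def Ww (s : ℝ) : ℝ := Real.sqrt (Uu s)
noncomputable def Ww' (s : ℝ) : ℝ := Uu' s / (2 * Ww s)
noncomputable def Gg (s : ℝ) : ℝ := Ww s - 2 * Real.exp (s/2) - 1 - Uu' s / (2 * Ww s)
noncomputable def Gg' (s : ℝ) : ℝ := Ww' s - Real.exp (s/2) -
  (Uu'' s * (2 * Ww s) - Uu' s * (2 * Ww' s)) / (2 * Ww s)^2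
noncomputable def Ff (s : ℝ) : ℝ := Gg s / (2 * Real.exp s)
noncomputable def Ff' (s : ℝ) : ℝ :=
  (Gg' s * (2 * Real.exp s) - Gg s * (2 * Real.exp s)) / (2 * Real.exp s)^2

lemma hUpos (s : ℝ) : 0 < Uu s := by unfold Uu; positivity

lemma hWpos (s : ℝ) : 0 < Ww s := Real.sqrt_pos.mpr (hUpos s)

lemma hexp2 (s : ℝ) : HasDerivAt (fun s : ℝ => Real.exp (s/2)) (Real.exp (s/2) / 2) s := by
  have h := ((hasDerivAt_id s).div_const 2).exp
  refine h.congr_deriv ?_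
  simp only [id_eq]
  ring

lemma hU (s : ℝ) : HasDerivAt Uu (Uu' s) s := by
  have h := (((Real.hasDerivAt_exp s).const_mul 12).add ((hexp2 s).const_mul 8)).add_const 1
  refine h.congr_deriv ?_
  unfold Uu'; ring

lemma hU2 (s : ℝ) : HasDerivAt Uu' (Uu'' s) s := by
  have h := ((Real.hasDerivAt_exp s).const_mul 12).add ((hexp2 s).const_mul 4)
  refine h.congr_deriv ?_
  unfold Uu''; ring

lemma hW (s : ℝ) : HasDerivAt Ww (Ww' s) s := (hU s).sqrt (hUpos s).ne'

lemma hG (s : ℝ) : HasDerivAt Gg (Gg' s) s := by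
  have hq : HasDerivAt (fun s => Uu' s / (2 * Ww s))
      ((Uu'' s * (2 * Ww s) - Uu' s * (2 * Ww' s)) / (2 * Ww s)^2) s :=
    (hU2 s).div ((hW s).const_mul 2) (by have := hWpos s; positivity)
  have h := (((hW s).sub ((hexp2 s).const_mul 2)).sub_const 1).sub hq
  refine h.congr_deriv ?_
  unfold Gg'; ring

lemma hρ' (s : ℝ) : HasDerivAt
    (fun s => (1 + 4 * Real.exp (s / 2) -
      Real.sqrt (12 * Real.exp s + 8 * Real.exp (s / 2) + 1)) / (2 * Real.exp s)) (Ff s) s := by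
  have hN : HasDerivAt (fun s => 1 + 4 * Real.exp (s / 2) - Ww s)
      (2 * Real.exp (s/2) - Ww' s) s := by
    have h := (((hexp2 s).const_mul 4).const_add 1).sub (hW s)
    refine h.congr_deriv ?_; ring
  have h := hN.div ((Real.hasDerivAt_exp s).const_mul 2) (by positivity)
  have he : ∀ t : ℝ, Ww t = Real.sqrt (12 * Real.exp t + 8 * Real.exp (t / 2) + 1) := by
    intro t; unfold Ww Uu; rfl
  simp only [he] at h
  refine h.congr_deriv ?_
  have hw := hWpos s
  have hwne : Ww s ≠ 0 := hw.ne'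
  have hene : Real.exp s ≠ 0 := (Real.exp_pos s).ne'
  unfold Ff Gg Ww'
  rw [← he]
  field_simp
  ring

lemma hF (s : ℝ) : HasDerivAt Ff (Ff' s) s :=
  (hG s).div ((Real.hasDerivAt_exp s).const_mul 2) (by positivity)

set_option maxHeartbeats 1000000 in
theorem stmt16 (ρ : ℝ → ℝ)
    (hρ : ∀ s : ℝ, ρ s = (1 + 4 * Real.exp (s / 2) -
      Real.sqrt (12 * Real.exp s + 8 * Real.exp (s / 2) + 1)) / (2 * Real.exp s)) :
    (∃ ε > (0 : ℝ), ∀ s ∈ Metric.ball (0 : ℝ) ε,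
        DifferentiableAt ℝ ρ s ∧ DifferentiableAt ℝ (deriv ρ) s) ∧
    ρ 0 = (5 - Real.sqrt 21) / 2 ∧
    deriv ρ 0 = -3 / 2 + (13 / 42) * Real.sqrt 21 ∧
    deriv (deriv ρ) 0 = 1 - (94 / 441) * Real.sqrt 21 ∧
    |(-(deriv ρ 0) / ρ 0) - 0.39089| < 0.001 ∧
    |((deriv ρ 0 / ρ 0) ^ 2 - deriv (deriv ρ) 0 / ρ 0) - 0.041565| < 0.001 := by
  have hρfun : ρ = fun s => (1 + 4 * Real.exp (s / 2) -
      Real.sqrt (12 * Real.exp s + 8 * Real.exp (s / 2) + 1)) / (2 * Real.exp s) :=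
    funext hρ
  have hd1 : ∀ s, HasDerivAt ρ (Ff s) s := by rw [hρfun]; exact hρ'
  have hderiv1 : deriv ρ = Ff := funext fun s => (hd1 s).deriv
  have hderiv2 : deriv (deriv ρ) 0 = Ff' 0 := by rw [hderiv1]; exact (hF 0).deriv
  -- numeric facts about sqrt 21
  set t := Real.sqrt 21 with ht
  have ht2 : t ^ 2 = 21 := Real.sq_sqrt (by norm_num)
  have ht0 : 0 < t := Real.sqrt_pos.mpr (by norm_num)
  have htlb : 4.5825 < t := by nlinarith
  have htub : t < 4.5826 := by nlinarith
  -- values at 0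
  have hU0 : Uu 0 = 21 := by unfold Uu; norm_num
  have hW0 : Ww 0 = t := by unfold Ww; rw [hU0]
  have hU'0 : Uu' 0 = 16 := by unfold Uu'; simp; norm_num
  have hU''0 : Uu'' 0 = 14 := by unfold Uu''; simp; norm_num
  have hW'0 : Ww' 0 = 8 / t := by
    unfold Ww'; rw [hW0, hU'0]; field_simp; ring
  have hG0 : Gg 0 = 13 / 21 * t - 3 := by
    unfold Gg; rw [hW0, hU'0]
    rw [show Real.exp (0/2 : ℝ) = 1 by norm_num]
    field_simp
    nlinarith [ht2, ht0]
  have hG'0 : Gg' 0 = 85 / 441 * t - 1 := by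
    unfold Gg'; rw [hW'0, hW0, hU'0, hU''0]
    rw [show Real.exp (0/2 : ℝ) = 1 by norm_num]
    field_simp
    linear_combination (-170 * t ^ 2 - 2688) * ht2
  have hρ0 : ρ 0 = (5 - t) / 2 := by
    rw [hρ 0]
    norm_num [ht]
  have hF0 : Ff 0 = -3 / 2 + 13 / 42 * t := by
    unfold Ff; rw [hG0]
    rw [show Real.exp (0:ℝ) = 1 from Real.exp_zero]
    ring
  have hF'0 : Ff' 0 = 1 - 94 / 441 * t := by
    unfold Ff'; rw [hG'0, hG0]
    rw [show Real.exp (0:ℝ) = 1 from Real.exp_zero]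
    ring
  have hd0 : deriv ρ 0 = -3 / 2 + 13 / 42 * t := by rw [hderiv1, hF0]
  have hdd0 : deriv (deriv ρ) 0 = 1 - 94 / 441 * t := by rw [hderiv2, hF'0]
  refine ⟨⟨1, by norm_num, fun s _ => ⟨(hd1 s).differentiableAt, ?_⟩⟩, hρ0, hd0, hdd0, ?_, ?_⟩
  · rw [hderiv1]; exact (hF s).differentiableAt
  · rw [hd0, hρ0]
    have h5t : 0 < 5 - t := by nlinarith
    have e1 : -(-3 / 2 + 13 / 42 * t) / ((5 - t) / 2) = (63 - 13 * t) / (21 * (5 - t)) := by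
      field_simp; ring
    have hq1 : (0.3908 : ℝ) < (63 - 13 * t) / (21 * (5 - t)) := by
      rw [lt_div_iff₀ (by positivity)]; nlinarith
    have hq2 : (63 - 13 * t) / (21 * (5 - t)) < (0.3910 : ℝ) := by
      rw [div_lt_iff₀ (by positivity)]; nlinarith
    rw [e1, abs_lt]
    constructor <;> linarith
  · rw [hd0, hdd0, hρ0]
    have h5t : 0 < 5 - t := by nlinarith
    have k1 : ((13 * t - 63) ^ 2 - (882 - 188 * t) * (5 - t)) = 184 * t - 840 := by
      linear_combination (-19) * ht2
    have k2 : (441 : ℝ) * (5 - t) ^ 2 = 20286 - 4410 * t := by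
      linear_combination 441 * ht2
    have hden : (0 : ℝ) < 20286 - 4410 * t := by linarith
    have e2 : ((-3 / 2 + 13 / 42 * t) / ((5 - t) / 2)) ^ 2 - (1 - 94 / 441 * t) / ((5 - t) / 2)
        = ((13 * t - 63) ^ 2 - (882 - 188 * t) * (5 - t)) / (441 * (5 - t) ^ 2) := by
      field_simp; ring
    have hq1 : (0.0410 : ℝ) < (184 * t - 840) / (20286 - 4410 * t) := by
      rw [lt_div_iff₀ hden]; linarith
    have hq2 : (184 * t - 840) / (20286 - 4410 * t) < (0.0420 : ℝ) := by
      rw [div_lt_iff₀ hden]; linarith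
    rw [e2, k1, k2, abs_lt]
    constructor <;> linarith
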